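/- For d = 2: let ρ = [[α, x̄],[x, 1−α]] and σ = [[β, ȳ],[y, 1−β]] be 2×2 density matrices with α < 1 and β < 1. If β ≥ α and β − |y|²/(1−β) ≥ α − |x|²/(1−α), then there exists a CPTP map E with E(|1⟩⟨1|) = |1⟩⟨1| and E(ρ) = σ. -/

import Mathlib

open Finset Matrix
open scoped ComplexOrder
lemma star_ofReal' (r : ℝ) : star ((r : ℝ) : ℂ) = ((r : ℝ) : ℂ) := by
  rw [Complex.star_def, Complex.conj_ofReal]

lemma star_mul_self_abs (z : ℂ) : star z * z = ((‖z‖ : ℝ) : ℂ) ^ 2 := by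
  rw [Complex.star_def, ← Complex.normSq_eq_conj_mul_self, ← Complex.sq_norm]; push_cast; ring

lemma tL1 (m Y D : ℝ) (hm : 0 ≤ m) (hY : 0 ≤ Y) (hD : 0 ≤ D)
    (hKey : Y ^ 2 ≤ m ^ 2 + D) :
    0 ≤ m * Y / (m ^ 2 + D) ∧ m * Y / (m ^ 2 + D) ≤ 1 ∧
    0 ≤ Y - (m * Y / (m ^ 2 + D)) * m ∧
    (Y - (m * Y / (m ^ 2 + D)) * m) ^ 2 + (m * Y / (m ^ 2 + D)) ^ 2 * D ≤ D := by
  set S := m ^ 2 + D with hS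
  have hS0 : 0 ≤ S := by positivity
  rcases eq_or_lt_of_le hS0 with h | h
  · have hm' : m = 0 := by nlinarith
    have hD' : D = 0 := by nlinarith
    have hY' : Y = 0 := by nlinarith
    simp [hm', hD', hY']
  · set t := m * Y / S with ht
    have hSne : S ≠ 0 := ne_of_gt h
    have ht0 : 0 ≤ t := by positivity
    have ht1 : t ≤ 1 := by
      rw [ht, div_le_one h]; nlinarith [sq_nonneg (m - Y)]
    have he : Y - t * m = Y * D / S := by
      rw [ht]; field_simp; ring
    refine ⟨ht0, ht1, ?_, ?_⟩
    · rw [he]; positivity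
    · rw [he, ht, div_pow, div_pow, div_mul_eq_mul_div, ← add_div,
        div_le_iff₀ (by positivity)]
      have h2 : (Y * D) ^ 2 + (m * Y) ^ 2 * D = D * (Y ^ 2 * S) := by rw [hS]; ring
      rw [h2]
      have : Y ^ 2 * S ≤ S * S := by nlinarith
      nlinarith

lemma real_sol (α β X Y : ℝ) (hα : α < 1) (hβ : β < 1) (h1 : α ≤ β)
    (hX : 0 ≤ X) (hY : 0 ≤ Y)
    (h2 : α - X ^ 2 / (1 - α) ≤ β - Y ^ 2 / (1 - β)) :
    ∃ c t q r s w : ℝ,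
      0 < c ∧ c ^ 2 * (1 - α) = 1 - β ∧
      0 ≤ t ∧ 0 ≤ s ∧ t ^ 2 + s ^ 2 = 1 ∧
      (t - s * r) * q = 0 ∧
      0 ≤ w ∧ q ^ 2 + (r * q) ^ 2 + w + c ^ 2 = 1 ∧
      c * t * X + c * q * (1 - α) = Y := by
  have hA : 0 < 1 - α := by linarith
  have hB : 0 < 1 - β := by linarith
  set A := 1 - α with hAdef
  set B := 1 - β with hBdef
  set c : ℝ := Real.sqrt (B / A) with hcdef
  have hc2 : c ^ 2 = B / A := Real.sq_sqrt (by positivity)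
  have hc0 : 0 < c := Real.sqrt_pos.mpr (by positivity)
  have hcA : c ^ 2 * A = B := by rw [hc2]; field_simp
  have hc1 : c ^ 2 ≤ 1 := by rw [hc2, div_le_one hA]; linarith
  set D := (β - α) * B with hDdef
  have hD0 : 0 ≤ D := mul_nonneg (by linarith) hB.le
  set m := c * X with hmdef
  have hm0 : 0 ≤ m := mul_nonneg hc0.le hX
  have hKey : Y ^ 2 ≤ m ^ 2 + D := by
    have hm2 : m ^ 2 = X ^ 2 * (B / A) := by rw [hmdef, mul_pow, hc2]; ring
    have h2' : Y ^ 2 / B ≤ (β - α) + X ^ 2 / A := by linarith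
    have h3 := (div_le_iff₀ hB).mp h2'
    rw [hm2, hDdef]
    calc Y ^ 2 ≤ ((β - α) + X ^ 2 / A) * B := h3
      _ = X ^ 2 * (B / A) + (β - α) * B := by ring
  obtain ⟨ht0, ht1, he0, hMain⟩ := tL1 m Y D hm0 hY hD0 hKey
  set t := m * Y / (m ^ 2 + D) with htdef
  clear_value t
  set e := Y - t * m with hedef
  clear h2 hKey htdef
  have ht2 : t ^ 2 ≤ 1 := by nlinarith
  set s := Real.sqrt (1 - t ^ 2) with hsdef
  have hs2 : s ^ 2 = 1 - t ^ 2 := Real.sq_sqrt (by linarith)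
  have hs0 : 0 ≤ s := Real.sqrt_nonneg _
  clear_value s
  clear hsdef
  set q := e / (c * A) with hqdef
  have hcA0 : c * A ≠ 0 := by positivity
  have hqe : c * q * A = e := by rw [hqdef]; field_simp
  clear_value c
  clear hcdef
  set r := t / s with hrdef
  clear_value A B D m e q r
  refine ⟨c, t, q, r, s, 1 - c ^ 2 - q ^ 2 - (r * q) ^ 2, hc0, hcA, ht0, hs0, by linarith, ?_, ?_, by ring, ?_⟩
  · -- (t - s*r) * q = 0
    rcases eq_or_ne s 0 with hs | hs
    · have ht1' : t ^ 2 = 1 := by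
        have : s ^ 2 = 0 := by rw [hs]; ring
        linarith [hs2, this]
      have he2 : e ^ 2 ≤ 0 := by
        have hM := hMain
        rw [ht1', one_mul] at hM
        linarith
      have he' : e = 0 := by
        have h00 : e ^ 2 = 0 := le_antisymm he2 (sq_nonneg e)
        exact pow_eq_zero_iff (two_ne_zero) |>.mp h00
      rw [hqdef, he']
      simp
    · rw [hrdef]
      field_simp
      ring
  · -- 0 ≤ w
    rcases eq_or_ne s 0 with hs | hs
    · have ht1' : t ^ 2 = 1 := by
        have h0 : s ^ 2 = 0 := by rw [hs]; ring
        linarith [hs2]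
      have he2 : e ^ 2 ≤ 0 := by
        have hM := hMain
        rw [ht1', one_mul] at hM
        linarith
      have he' : e = 0 := by
        have h00 : e ^ 2 = 0 := le_antisymm he2 (sq_nonneg e)
        exact pow_eq_zero_iff (two_ne_zero) |>.mp h00
      have hq' : q = 0 := by rw [hqdef, he']; simp
      rw [hq']
      have hg : (1:ℝ) - c ^ 2 - 0 ^ 2 - (r * 0) ^ 2 = 1 - c ^ 2 := by ring
      rw [hg]
      linarith
    · have hs2pos : 0 < s ^ 2 := by
        rcases lt_or_eq_of_le hs0 with h | h
        · positivity
        · exact absurd h.symm hs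
      have hr : s * r = t := by rw [hrdef]; field_simp
      have hrt : s ^ 2 * r ^ 2 = t ^ 2 := by rw [← hr]; ring
      have hq2 : (c * q * A) ^ 2 + t ^ 2 * D ≤ D := by rw [hqe]; exact hMain
      have hcApos : 0 < c ^ 2 * A := by positivity
      have e1 : q ^ 2 * A * (c ^ 2 * A) ≤ ((β - α) * s ^ 2) * (c ^ 2 * A) := by
        calc q ^ 2 * A * (c ^ 2 * A) = (c * q * A) ^ 2 := by ring
          _ ≤ D - t ^ 2 * D := by linarith
          _ = ((β - α) * s ^ 2) * (c ^ 2 * A) := by rw [hDdef, ← hcA, hs2]; ring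
      have key : q ^ 2 * A ≤ (β - α) * s ^ 2 := le_of_mul_le_mul_right e1 hcApos
      have hsA : 0 < s ^ 2 * A := by positivity
      have e4 : (q ^ 2 + (r * q) ^ 2) * (s ^ 2 * A) = q ^ 2 * A := by
        have h4 : (q ^ 2 + (r * q) ^ 2) * (s ^ 2 * A) = q ^ 2 * A * (s ^ 2 + s ^ 2 * r ^ 2) := by
          ring
        rw [h4, hrt]
        linear_combination q ^ 2 * A * hs2
      have e5 : (1 - c ^ 2) * (s ^ 2 * A) = (β - α) * s ^ 2 := by
        have h5 : (1 - c ^ 2) * (s ^ 2 * A) = (A - c ^ 2 * A) * s ^ 2 := by ring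
        rw [h5, hcA, hAdef, hBdef]; ring
      have e6 : (q ^ 2 + (r * q) ^ 2) * (s ^ 2 * A) ≤ (1 - c ^ 2) * (s ^ 2 * A) := by
        rw [e4, e5]; exact key
      have e7 : q ^ 2 + (r * q) ^ 2 ≤ 1 - c ^ 2 := le_of_mul_le_mul_right e6 hsA
      linarith
  · -- c*t*X + c*q*A = Y
    rw [hqe, hedef, hmdef]; ring

lemma two_level_scalars (α β : ℝ) (x y : ℂ) (hα : α < 1) (hβ : β < 1)
    (h1 : α ≤ β)
    (h2 : α - ‖x‖ ^ 2 / (1 - α) ≤ β - ‖y‖ ^ 2 / (1 - β)) :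
    ∃ a a2 b b2 b3 c : ℂ,
      (star a * a + star a2 * a2 = 1) ∧
      (star a * b + star a2 * b2 = 0) ∧
      (star b * b + star b2 * b2 + star b3 * b3 + star c * c = 1) ∧
      (c * star a * x + c * star b * ((1 - α : ℝ) : ℂ) = y) ∧
      (star c * c * ((1 - α : ℝ) : ℂ) = ((1 - β : ℝ) : ℂ)) ∧
      (star c = c) := by
  set X := ‖x‖ with hXdef
  set Y := ‖y‖ with hYdef
  obtain ⟨c, t, q, r, s, w, hc0, hcA, ht0, hs0, hts, htsr, hw0, hsum, hfin⟩ :=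
    real_sol α β X Y hα hβ h1 (norm_nonneg x) (norm_nonneg y) h2
  have hx2 : star x * x = ((X : ℝ) : ℂ) ^ 2 := by rw [hXdef]; exact star_mul_self_abs x
  have hy2 : star y * y = ((Y : ℝ) : ℂ) ^ 2 := by rw [hYdef]; exact star_mul_self_abs y
  have hYne : y ≠ 0 → ((Y : ℝ) : ℂ) ≠ 0 := by
    intro h
    simp only [ne_eq, Complex.ofReal_eq_zero, hYdef]
    exact norm_ne_zero_iff.mpr h
  have hXne : x ≠ 0 → ((X : ℝ) : ℂ) ≠ 0 := by
    intro h
    simp only [ne_eq, Complex.ofReal_eq_zero, hXdef]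
    exact norm_ne_zero_iff.mpr h
  set u : ℂ := if y = 0 then 1 else y / ((Y : ℝ) : ℂ) with hudef
  have huu : star u * u = 1 := by
    rw [hudef]
    split_ifs with h
    · simp
    · rw [star_div₀, star_ofReal']
      field_simp [hYne h]
      linear_combination hy2
  have huY : u * ((Y : ℝ) : ℂ) = y := by
    rw [hudef]
    split_ifs with h
    · simp only [one_mul]
      rw [h] at hYdef ⊢
      simp [hYdef]
    · exact div_mul_cancel₀ y (hYne h)
  set φ : ℂ := if x = 0 then 1 else (x / ((X : ℝ) : ℂ)) * star u with hφdef
  have hφφ : star φ * φ = 1 := by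
    rw [hφdef]
    split_ifs with h
    · simp
    · rw [star_mul', star_div₀, star_star, star_ofReal']
      field_simp [hXne h]
      linear_combination (u * star u) * hx2 + ((X : ℝ) : ℂ) ^ 2 * huu
  have hφx : star φ * x = u * ((X : ℝ) : ℂ) := by
    rw [hφdef]
    split_ifs with h
    · rw [h] at hXdef ⊢
      simp [hXdef]
    · rw [star_mul', star_div₀, star_star, star_ofReal']
      field_simp [hXne h]
      linear_combination u * hx2
  -- cast facts
  have htsC : ((t : ℝ) : ℂ) ^ 2 + ((s : ℝ) : ℂ) ^ 2 = 1 := by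
    have := congrArg (Complex.ofReal) hts
    push_cast at this
    linear_combination this
  have htsrC : (((t : ℝ) : ℂ) - ((s : ℝ) : ℂ) * ((r : ℝ) : ℂ)) * ((q : ℝ) : ℂ) = 0 := by
    have := congrArg (Complex.ofReal) htsr
    push_cast at this
    linear_combination this
  have hwC : ((Real.sqrt w : ℝ) : ℂ) ^ 2 = ((w : ℝ) : ℂ) := by
    rw [← Complex.ofReal_pow, Real.sq_sqrt hw0]
  have hsumC : ((q : ℝ) : ℂ) ^ 2 + (((r : ℝ) : ℂ) * ((q : ℝ) : ℂ)) ^ 2 + ((w : ℝ) : ℂ)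
      + ((c : ℝ) : ℂ) ^ 2 = 1 := by
    have := congrArg (Complex.ofReal) hsum
    push_cast at this
    linear_combination this
  have hfinC : ((c : ℝ) : ℂ) * ((t : ℝ) : ℂ) * ((X : ℝ) : ℂ)
      + ((c : ℝ) : ℂ) * ((q : ℝ) : ℂ) * ((1 - α : ℝ) : ℂ) = ((Y : ℝ) : ℂ) := by
    have := congrArg (Complex.ofReal) hfin
    push_cast at this ⊢
    linear_combination this
  have hcAC : ((c : ℝ) : ℂ) ^ 2 * ((1 - α : ℝ) : ℂ) = ((1 - β : ℝ) : ℂ) := by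
    have := congrArg (Complex.ofReal) hcA
    push_cast at this ⊢
    linear_combination this
  refine ⟨((t : ℝ) : ℂ) * φ, ((s : ℝ) : ℂ), star u * ((q : ℝ) : ℂ),
    -(((r : ℝ) : ℂ)) * star φ * (star u * ((q : ℝ) : ℂ)), ((Real.sqrt w : ℝ) : ℂ),
    ((c : ℝ) : ℂ), ?_, ?_, ?_, ?_, ?_, ?_⟩
  · simp only [star_mul', star_neg, star_star, star_ofReal']
    linear_combination ((t : ℝ) : ℂ) ^ 2 * hφφ + htsC
  · simp only [star_mul', star_neg, star_star, star_ofReal']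
    linear_combination (star φ * star u) * htsrC
  · simp only [star_mul', star_neg, star_star, star_ofReal']
    linear_combination (((q : ℝ) : ℂ) ^ 2 + ((r : ℝ) : ℂ) ^ 2 * ((q : ℝ) : ℂ) ^ 2 * (star φ * φ)) * huu
      + ((r : ℝ) : ℂ) ^ 2 * ((q : ℝ) : ℂ) ^ 2 * hφφ + hwC + hsumC
  · simp only [star_mul', star_neg, star_star, star_ofReal']
    linear_combination (((c : ℝ) : ℂ) * ((t : ℝ) : ℂ)) * hφx + u * hfinC + huY
  · simp only [star_ofReal']
    linear_combination hcAC
  · exact star_ofReal' c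

theorem two_level_gibbs_preserving_sufficient
    (α β : ℝ) (x y : ℂ) (hα : α < 1) (hβ : β < 1)
    (ρ σ : Matrix (Fin 2) (Fin 2) ℂ)
    (hρ : ρ = !![(α : ℂ), star x; x, ((1 - α : ℝ) : ℂ)])
    (hσ : σ = !![(β : ℂ), star y; y, ((1 - β : ℝ) : ℂ)])
    (hρpsd : ρ.PosSemidef) (hσpsd : σ.PosSemidef)
    (h1 : α ≤ β)
    (h2 : α - ‖x‖ ^ 2 / (1 - α) ≤ β - ‖y‖ ^ 2 / (1 - β)) :
    ∃ (r : ℕ) (K : Fin r → Matrix (Fin 2) (Fin 2) ℂ),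
      (∑ i, (K i)ᴴ * K i = 1) ∧
      (∑ i, K i * (!![1, 0; 0, 0] : Matrix (Fin 2) (Fin 2) ℂ) * (K i)ᴴ = !![1, 0; 0, 0]) ∧
      (∑ i, K i * ρ * (K i)ᴴ = σ) := by
  obtain ⟨a, a2, b, b2, b3, c, H1, H2, H3, H4, H5, H6⟩ :=
    two_level_scalars α β x y hα hβ h1 h2
  have H2s : star b * a + star b2 * a2 = 0 := by
    have := congrArg star H2
    simp only [star_add, star_mul', star_star, star_zero] at this
    linear_combination this
  have H4s : star c * a * star x + star c * b * ((1 - α : ℝ) : ℂ) = star y := by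
    have := congrArg star H4
    simp only [star_add, star_mul', star_star, star_ofReal'] at this
    linear_combination this
  push_cast at H4 H4s H5
  refine ⟨3, ![!![a, b; 0, c], !![a2, b2; 0, 0], !![0, b3; 0, 0]], ?_, ?_, ?_⟩
  · rw [Fin.sum_univ_three]
    ext i j
    fin_cases i <;> fin_cases j <;>
      simp [Matrix.mul_apply, Matrix.vecMul, dotProduct, Fin.sum_univ_two,
        Matrix.one_apply, conjTranspose_apply] <;>
      simp only [← Complex.star_def] <;> push_cast <;> ring_nf
    · linear_combination H1
    · linear_combination H2
    · linear_combination H2s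
    · linear_combination H3
  · rw [Fin.sum_univ_three]
    ext i j
    fin_cases i <;> fin_cases j <;>
      simp [Matrix.mul_apply, Matrix.vecMul, dotProduct, Fin.sum_univ_two,
        conjTranspose_apply] <;>
      simp only [← Complex.star_def] <;> push_cast <;> ring_nf
    · linear_combination H1
  · rw [Fin.sum_univ_three, hρ, hσ]
    ext i j
    fin_cases i <;> fin_cases j <;>
      simp [Matrix.mul_apply, Matrix.vecMul, dotProduct, Fin.sum_univ_two,
        conjTranspose_apply] <;>
      simp only [← Complex.star_def] <;> push_cast <;> ring_nf
    · linear_combination (α : ℂ) * H1 + x * H2 + star x * H2s + (1 - (α : ℂ)) * H3 - H5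
    · linear_combination H4s
    · linear_combination H4
    · linear_combination H5
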